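/- For any solution x of the EigenAnt dynamics with positive initial conditions, the sum S(t) := Σ_{j=1}^n x_j(t) obeys the explicit two-sided exponential bounds, for all t ≥ 0: (β d_n)/α + (S(0) − (β d_n)/α) e^{−αt} ≤ S(t) ≤ (β d_1)/α + (S(0) − (β d_1)/α) e^{−αt}. -/

import Mathlib

open Filter MeasureTheory Set Real

lemma comp_upper {α b : ℝ} (hα : 0 < α) {f f' : ℝ → ℝ}
    (hf : ∀ t, 0 ≤ t → HasDerivAt f (f' t) t)
    (hb : ∀ t, 0 ≤ t → f' t ≤ -α * f t + b) :
    ∀ t, 0 ≤ t → f t ≤ b / α + (f 0 - b / α) * Real.exp (-α * t) := by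
  set u : ℝ → ℝ := fun t => (f t - b / α) * Real.exp (α * t) with hu
  have hud : ∀ t, 0 ≤ t → HasDerivAt u ((f' t + α * f t - b) * Real.exp (α * t)) t := by
    intro t ht
    have h1 : HasDerivAt (fun t => f t - b / α) (f' t) t := (hf t ht).sub_const _
    have h2 : HasDerivAt (fun t : ℝ => Real.exp (α * t)) (Real.exp (α * t) * α) t :=
      by simpa using ((hasDerivAt_id t).const_mul α).exp
    have h3 := h1.mul h2
    refine h3.congr_deriv ?_
    have hb' : b / α * α = b := div_mul_cancel₀ b hα.ne'
    linear_combination (-Real.exp (α * t)) * hb'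
  have hanti : AntitoneOn u (Ici 0) := by
    apply antitoneOn_of_deriv_nonpos (convex_Ici 0)
    · intro t ht
      exact ((hud t ht).continuousAt).continuousWithinAt
    · intro t ht
      rw [interior_Ici] at ht
      exact ((hud t ht.le).differentiableAt).differentiableWithinAt
    · intro t ht
      rw [interior_Ici] at ht
      rw [(hud t ht.le).deriv]
      have hle := hb t ht.le
      have he := Real.exp_pos (α * t)
      nlinarith
  intro t ht
  have h := hanti self_mem_Ici ht ht
  have hexp1 : Real.exp (α * t) * Real.exp (-α * t) = 1 := by
    rw [← Real.exp_add]; ring_nf; exact Real.exp_zero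
  have key : f t - b / α ≤ (f 0 - b / α) * Real.exp (-α * t) := by
    calc f t - b / α = (f t - b / α) * (Real.exp (α * t) * Real.exp (-α * t)) := by
          rw [hexp1]; ring
      _ = u t * Real.exp (-α * t) := by rw [hu]; ring
      _ ≤ u 0 * Real.exp (-α * t) :=
          mul_le_mul_of_nonneg_right h (Real.exp_pos _).le
      _ = (f 0 - b / α) * Real.exp (-α * t) := by
          rw [hu]; norm_num
  linarith

lemma comp_lower {α b : ℝ} (hα : 0 < α) {f f' : ℝ → ℝ}
    (hf : ∀ t, 0 ≤ t → HasDerivAt f (f' t) t)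
    (hb : ∀ t, 0 ≤ t → -α * f t + b ≤ f' t) :
    ∀ t, 0 ≤ t → b / α + (f 0 - b / α) * Real.exp (-α * t) ≤ f t := by
  intro t ht
  have := comp_upper (b := -b) hα (f := fun t => -f t) (f' := fun t => -(f' t))
    (fun t ht => (hf t ht).neg) (fun t ht => by have := hb t ht; simp; linarith) t ht
  simp only [neg_div] at this
  linarith

theorem stmt3
    (n : ℕ) (hn : 0 < n) (α β : ℝ) (hα : 0 < α) (hβ : 0 < β)
    (d : Fin n → ℝ) (hd : ∀ i j : Fin n, i ≤ j → d j ≤ d i) (hdpos : ∀ i, 0 < d i)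
    (x : ℝ → Fin n → ℝ)
    (hS : ∀ t : ℝ, 0 ≤ t → (∑ j, x t j) ≠ 0)
    (hode : ∀ (i : Fin n) (t : ℝ), 0 ≤ t →
      HasDerivAt (fun s => x s i) ((-α + β * d i / (∑ j, x t j)) * x t i) t)
    (hx0 : ∀ i, 0 < x 0 i)
    :
    ∀ t : ℝ, 0 ≤ t →
      β * d ⟨n - 1, by omega⟩ / α + ((∑ j, x 0 j) - β * d ⟨n - 1, by omega⟩ / α) * Real.exp (-α * t)
        ≤ ∑ j, x t j ∧
      ∑ j, x t j ≤
        β * d ⟨0, hn⟩ / α + ((∑ j, x 0 j) - β * d ⟨0, hn⟩ / α) * Real.exp (-α * t) := by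
  haveI : Nonempty (Fin n) := ⟨⟨0, hn⟩⟩
  set S : ℝ → ℝ := fun t => ∑ j, x t j with hSdef
  have hSd : ∀ t, 0 ≤ t → HasDerivAt S (∑ i, (-α + β * d i / S t) * x t i) t :=
    fun t ht => HasDerivAt.fun_sum (u := Finset.univ) (fun i _ => hode i t ht)
  have contS : ContinuousOn S (Ici 0) :=
    fun t ht => (hSd t ht).continuousAt.continuousWithinAt
  -- positivity of each component
  have hxpos : ∀ t : ℝ, 0 ≤ t → ∀ i, 0 < x t i := by
    intro t ht i
    set c : ℝ → ℝ := fun s => -α + β * d i / S (max s 0) with hc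
    have hmax : ∀ s : ℝ, max s 0 ∈ Ici (0:ℝ) := fun s => Set.mem_Ici.mpr (le_max_right _ _)
    have hcont_c : Continuous c := by
      have h1 : Continuous fun s : ℝ => S (max s 0) :=
        contS.comp_continuous (continuous_id.max continuous_const) hmax
      have h2 : ∀ s : ℝ, S (max s 0) ≠ 0 := fun s => hS _ (le_max_right _ _)
      exact continuous_const.add (continuous_const.div h1 h2)
    set F : ℝ → ℝ := fun u => ∫ s in (0:ℝ)..u, c s with hF
    have hFd : ∀ u : ℝ, HasDerivAt F (c u) u := fun u =>
      (hcont_c.integral_hasStrictDerivAt 0 u).hasDerivAt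
    set E : ℝ → ℝ := fun s => x s i * Real.exp (-(F s)) with hE
    have hEd : ∀ s : ℝ, 0 ≤ s → HasDerivAt E 0 s := by
      intro s hs
      have h1 : HasDerivAt (fun u => Real.exp (-(F u))) (Real.exp (-(F s)) * (-(c s))) s :=
        ((hFd s).neg).exp
      have h2 := (hode i s hs).mul h1
      refine h2.congr_deriv ?_
      have : c s = -α + β * d i / S s := by rw [hc]; simp [max_eq_left hs]
      rw [this]
      ring
    have hconst := constant_of_has_deriv_right_zero
      (f := E) (a := 0) (b := t)
      (fun s hs => (hEd s hs.1).continuousAt.continuousWithinAt)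
      (fun s hs => (hEd s hs.1).hasDerivWithinAt)
      t ⟨ht, le_refl t⟩
    have hF0 : F 0 = 0 := by rw [hF]; simp
    have hE0 : E 0 = x 0 i := by rw [hE]; simp [hF0]
    have hEt : x t i * Real.exp (-(F t)) = x 0 i := by
      rw [← hE0]; exact hconst
    have := hx0 i
    nlinarith [Real.exp_pos (-(F t))]
  have hSpos : ∀ t : ℝ, 0 ≤ t → 0 < S t := fun t ht =>
    Finset.sum_pos (fun i _ => hxpos t ht i) Finset.univ_nonempty
  -- rewrite the derivative of S
  have hDeq : ∀ t : ℝ, (∑ i, (-α + β * d i / S t) * x t i)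
      = -α * S t + (β / S t) * ∑ i, d i * x t i := by
    intro t
    have h1 : -α * S t = ∑ i, -α * x t i := Finset.mul_sum _ _ _
    have h2 : (β / S t) * (∑ i, d i * x t i) = ∑ i, (β / S t) * (d i * x t i) :=
      Finset.mul_sum _ _ _
    rw [h1, h2, ← Finset.sum_add_distrib]
    exact Finset.sum_congr rfl fun i _ => by ring
  -- index inequalities
  have hdle : ∀ i : Fin n, d i ≤ d ⟨0, hn⟩ := fun i => hd ⟨0, hn⟩ i (by
    simp [Fin.le_def])
  have hdge : ∀ i : Fin n, d ⟨n - 1, by omega⟩ ≤ d i := fun i => hd i ⟨n - 1, by omega⟩ (by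
    simp [Fin.le_def]; omega)
  -- derivative bounds
  have hub : ∀ t : ℝ, 0 ≤ t →
      (∑ i, (-α + β * d i / S t) * x t i) ≤ -α * S t + β * d ⟨0, hn⟩ := by
    intro t ht
    rw [hDeq t]
    have hSp := hSpos t ht
    have hsum : (∑ i, d i * x t i) ≤ d ⟨0, hn⟩ * S t := by
      have h3 : d ⟨0, hn⟩ * S t = ∑ i, d ⟨0, hn⟩ * x t i := Finset.mul_sum _ _ _
      rw [h3]
      exact Finset.sum_le_sum fun i _ =>
        mul_le_mul_of_nonneg_right (hdle i) (hxpos t ht i).le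
    have hfr : (0:ℝ) ≤ β / S t := (div_pos hβ hSp).le
    have h4 := mul_le_mul_of_nonneg_left hsum hfr
    have heq : (β / S t) * (d ⟨0, hn⟩ * S t) = β * d ⟨0, hn⟩ := by
      field_simp
    linarith
  have hlb : ∀ t : ℝ, 0 ≤ t →
      -α * S t + β * d ⟨n - 1, by omega⟩ ≤ (∑ i, (-α + β * d i / S t) * x t i) := by
    intro t ht
    rw [hDeq t]
    have hSp := hSpos t ht
    have hsum : d ⟨n - 1, by omega⟩ * S t ≤ (∑ i, d i * x t i) := by
      have h3 : d ⟨n - 1, by omega⟩ * S t = ∑ i, d ⟨n - 1, by omega⟩ * x t i :=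
        Finset.mul_sum _ _ _
      rw [h3]
      exact Finset.sum_le_sum fun i _ =>
        mul_le_mul_of_nonneg_right (hdge i) (hxpos t ht i).le
    have hfr : (0:ℝ) ≤ β / S t := (div_pos hβ hSp).le
    have h4 := mul_le_mul_of_nonneg_left hsum hfr
    have heq : (β / S t) * (d ⟨n - 1, by omega⟩ * S t) = β * d ⟨n - 1, by omega⟩ := by
      field_simp
    linarith
  intro t ht
  have hupper := comp_upper (b := β * d ⟨0, hn⟩) hα hSd hub t ht
  have hlower := comp_lower (b := β * d ⟨n - 1, by omega⟩) hα hSd hlb t ht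
  exact ⟨hlower, hupper⟩
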